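/- Suppose n < ω and X is any set. Then |X| ≤ ℵ_n if and only if there exist sets D_1, ..., D_{n+2} ⊆ X^{n+2} whose union is X^{n+2}, such that for every 1 ≤ i ≤ n + 2 and every line ℓ ⊆ X^{n+2} parallel to the i-th coordinate axis, the intersection D_i ∩ ℓ is finite. -/

import Mathlib

open Set

universe u v

private def Cov (N : ℕ) (X : Type u) : Prop :=
  ∃ D : Fin N → Set (Fin N → X),
    (⋃ i, D i) = Set.univ ∧
    ∀ (i : Fin N) (a : Fin N → X),
      (D i ∩ {p : Fin N → X | ∀ j, j ≠ i → p j = a j}).Finite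

private lemma cov_pullback {X : Type u} {Y : Type v} (f : Y ↪ X) {N : ℕ}
    (h : Cov N X) : Cov N Y := by
  obtain ⟨D, hcov, hfin⟩ := h
  have hinj : Function.Injective (fun p : Fin N → Y => f ∘ p) := fun p q hpq =>
    funext fun m => f.injective (congrFun hpq m)
  refine ⟨fun i => (fun p => f ∘ p) ⁻¹' D i, ?_, ?_⟩
  · ext p
    simp only [mem_iUnion, mem_preimage, mem_univ, iff_true]
    exact mem_iUnion.1 (hcov ▸ mem_univ (f ∘ p))
  · intro i a
    have hsub : (fun p : Fin N → Y => f ∘ p) ⁻¹' D i ∩ {p | ∀ j, j ≠ i → p j = a j} ⊆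
        (fun p : Fin N → Y => f ∘ p) ⁻¹' (D i ∩ {p | ∀ j, j ≠ i → p j = (f ∘ a) j}) := by
      rintro p ⟨hp1, hp2⟩
      exact ⟨hp1, fun j hj => by simp [Function.comp, hp2 j hj]⟩
    exact (((hfin i (f ∘ a)).preimage hinj.injOn).subset hsub)

private lemma cov_one_of_finite {X : Type u} [Finite X] : Cov 1 X :=
  ⟨fun _ => univ, by rw [iUnion_const], fun _ _ => Set.toFinite _⟩

private lemma finite_of_cov_one {X : Type u} (h : Cov 1 X) : Finite X := by
  rcases isEmpty_or_nonempty X with he | hn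
  · exact Finite.of_subsingleton
  obtain ⟨D, hcov, hfin⟩ := h
  have h0 : (D 0).Finite := by
    have h1 := hfin 0 (fun _ => Classical.arbitrary X)
    have he : {p : Fin 1 → X | ∀ j, j ≠ 0 → p j = (fun _ => Classical.arbitrary X) j} = univ :=
      eq_univ_of_forall (fun p j hj => absurd (Subsingleton.elim j 0) hj)
    simpa [he] using h1
  have huniv : (univ : Set (Fin 1 → X)).Finite := by
    refine h0.subset ?_
    intro p _
    rcases mem_iUnion.1 (hcov ▸ mem_univ p) with ⟨i, hi⟩
    rwa [Subsingleton.elim i 0] at hi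
  have : Finite (Fin 1 → X) := Set.finite_univ_iff.1 huniv
  exact Finite.of_injective (fun x => (fun _ => x : Fin 1 → X)) (fun a b hab => congrFun hab 0)

/-- Push a covering of `Iic β` forward to a covering of the bounded block in `X`. -/
private lemma bounded_cov {X : Type u} [LinearOrder X] {N : ℕ} {β : X}
    (h : Cov (N + 1) (Set.Iic β)) :
    ∃ E : Fin (N + 1) → Set (Fin (N + 1) → X),
      (∀ q : Fin (N + 1) → X, (∀ m, q m ≤ β) → ∃ k, q ∈ E k) ∧
      ∀ (k : Fin (N + 1)) (a : Fin (N + 1) → X),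
        (E k ∩ {q | ∀ m, m ≠ k → q m = a m}).Finite := by
  obtain ⟨D, hcov, hfin⟩ := h
  refine ⟨fun k => (fun q : Fin (N + 1) → Set.Iic β => fun m => (q m : X)) '' D k, ?_, ?_⟩
  · intro q hq
    have hmem : (fun m => (⟨q m, hq m⟩ : Set.Iic β)) ∈ ⋃ k, D k := hcov ▸ mem_univ _
    obtain ⟨k, hk⟩ := mem_iUnion.1 hmem
    exact ⟨k, ⟨_, hk, rfl⟩⟩
  · intro k a
    set a' : Fin (N + 1) → Set.Iic β := fun m => ⟨min (a m) β, min_le_right _ _⟩ with ha'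
    have hsub : (fun q : Fin (N + 1) → Set.Iic β => fun m => (q m : X)) '' D k ∩
        {q | ∀ m, m ≠ k → q m = a m} ⊆
        (fun q : Fin (N + 1) → Set.Iic β => fun m => (q m : X)) ''
          (D k ∩ {q | ∀ m, m ≠ k → q m = a' m}) := by
      rintro q ⟨⟨q', hq', rfl⟩, hline⟩
      refine ⟨q', ⟨hq', fun m hm => ?_⟩, rfl⟩
      have h1 : (q' m : X) = a m := hline m hm
      have h2 : a m ≤ β := h1 ▸ (q' m).2
      apply Subtype.ext
      simp [ha', min_eq_left h2, h1]
    exact (((hfin k a').image _).subset hsub)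

private noncomputable def argmaxIdx {X : Type u} [LinearOrder X] {M : ℕ}
    (p : Fin (M + 1) → X) : Fin (M + 1) :=
  (Finset.univ.filter (fun i => ∀ j, p j ≤ p i)).min' (by
    obtain ⟨i, hi⟩ := Finite.exists_max p
    exact ⟨i, by simpa using hi⟩)

private lemma argmaxIdx_spec {X : Type u} [LinearOrder X] {M : ℕ} (p : Fin (M + 1) → X) :
    ∀ j, p j ≤ p (argmaxIdx p) := by
  have := Finset.min'_mem (Finset.univ.filter (fun i => ∀ j, p j ≤ p i)) (by
    obtain ⟨i, hi⟩ := Finite.exists_max p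
    exact ⟨i, by simpa using hi⟩)
  exact (Finset.mem_filter.1 this).2

private lemma argmaxIdx_min {X : Type u} [LinearOrder X] {M : ℕ} {p : Fin (M + 1) → X}
    {i : Fin (M + 1)} (h : ∀ j, p j ≤ p i) : argmaxIdx p ≤ i :=
  Finset.min'_le _ _ (by simpa using h)

private lemma cov_step {X : Type u} [LinearOrder X] {N : ℕ}
    (h : ∀ x : X, Cov (N + 1) (Set.Iic x)) : Cov (N + 2) X := by
  choose E hE1 hE2 using fun β : X => bounded_cov (h β)
  refine ⟨fun j => {p | ∃ k : Fin (N + 1), (argmaxIdx p).succAbove k = j ∧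
      (fun m => p ((argmaxIdx p).succAbove m)) ∈ E (p (argmaxIdx p)) k}, ?_, ?_⟩
  · apply eq_univ_of_forall
    intro p
    obtain ⟨k, hk⟩ := hE1 (p (argmaxIdx p)) (fun m => p ((argmaxIdx p).succAbove m))
      (fun m => argmaxIdx_spec p _)
    exact mem_iUnion.2 ⟨(argmaxIdx p).succAbove k, k, rfl, hk⟩
  · intro j a
    obtain ⟨m₀, hm₀⟩ := exists_ne j
    have hs : (Finset.univ.erase j).Nonempty := ⟨m₀, Finset.mem_erase.2 ⟨hm₀, Finset.mem_univ _⟩⟩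
    set β₀ : X := (Finset.univ.erase j).sup' hs a with hβ₀
    obtain ⟨mβ, hmβ, hmβeq⟩ := Finset.exists_mem_eq_sup' hs a
    have hfs : ((Finset.univ.erase j).filter (fun m => a m = β₀)).Nonempty :=
      ⟨mβ, Finset.mem_filter.2 ⟨hmβ, hmβeq.symm⟩⟩
    set k₀ : Fin (N + 2) := ((Finset.univ.erase j).filter (fun m => a m = β₀)).min' hfs with hk₀
    have hk₀mem := Finset.mem_filter.1 (Finset.min'_mem _ hfs)
    have hk₀j : k₀ ≠ j := (Finset.mem_erase.1 hk₀mem.1).1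
    have hk₀a : a k₀ = β₀ := hk₀mem.2
    obtain ⟨k₁, hk₁⟩ := Fin.exists_succAbove_eq (Ne.symm hk₀j)
    -- the key claim : on the line, any point of `D j` has its argmax at `k₀`
    have key : ∀ p : Fin (N + 2) → X,
        p ∈ {p : Fin (N + 2) → X | ∃ k : Fin (N + 1), (argmaxIdx p).succAbove k = j ∧
          (fun m => p ((argmaxIdx p).succAbove m)) ∈ E (p (argmaxIdx p)) k} ∩
          {p | ∀ m, m ≠ j → p m = a m} → argmaxIdx p = k₀ := by
      rintro p ⟨⟨k, hk, _⟩, hline⟩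
      have hij : argmaxIdx p ≠ j := fun hij => (Fin.succAbove_ne _ k) (hk.trans hij.symm)
      have hpi : p (argmaxIdx p) = a (argmaxIdx p) := hline _ hij
      have hib : a (argmaxIdx p) ≤ β₀ :=
        Finset.le_sup' a (Finset.mem_erase.2 ⟨hij, Finset.mem_univ _⟩)
      have hpk₀ : p k₀ = β₀ := (hline _ hk₀j).trans hk₀a
      have hk₀max : ∀ m, p m ≤ p k₀ := by
        intro m
        rcases eq_or_ne m j with hmj | hmj
        · rw [hmj, hpk₀]
          exact ((argmaxIdx_spec p j).trans (le_of_eq hpi)).trans hib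
        · rw [hline m hmj, hpk₀]
          exact Finset.le_sup' a (Finset.mem_erase.2 ⟨hmj, Finset.mem_univ _⟩)
      have h1 : argmaxIdx p ≤ k₀ := argmaxIdx_min hk₀max
      have h2 : k₀ ≤ argmaxIdx p := by
        apply Finset.min'_le
        refine Finset.mem_filter.2 ⟨Finset.mem_erase.2 ⟨hij, Finset.mem_univ _⟩, ?_⟩
        rw [← hpi]
        exact le_antisymm (hpi ▸ hib) (hpk₀ ▸ argmaxIdx_spec p k₀)
      exact le_antisymm h1 h2
    -- finiteness via the injection p ↦ restriction of p
    set φ : (Fin (N + 2) → X) → (Fin (N + 1) → X) := fun p m => p (k₀.succAbove m) with hφ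
    set c : Fin (N + 1) → X := fun m => a (k₀.succAbove m) with hc
    have himg : φ '' ({p : Fin (N + 2) → X | ∃ k : Fin (N + 1), (argmaxIdx p).succAbove k = j ∧
          (fun m => p ((argmaxIdx p).succAbove m)) ∈ E (p (argmaxIdx p)) k} ∩
          {p | ∀ m, m ≠ j → p m = a m}) ⊆
        E β₀ k₁ ∩ {q | ∀ m, m ≠ k₁ → q m = c m} := by
      rintro _ ⟨p, hp, rfl⟩
      have hi := key p hp
      obtain ⟨⟨k, hk, hmem⟩, hline⟩ := hp
      rw [hi] at hk hmem
      have hkk : k = k₁ := Fin.succAbove_right_injective (hk.trans hk₁.symm)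
      subst hkk
      have hpk₀ : p k₀ = β₀ := (hline _ hk₀j).trans hk₀a
      rw [hpk₀] at hmem
      refine ⟨hmem, fun m hm => hline _ ?_⟩
      exact fun hj => hm (Fin.succAbove_right_injective (hj.trans hk₁.symm))
    have hI : Set.InjOn φ ({p : Fin (N + 2) → X | ∃ k : Fin (N + 1), (argmaxIdx p).succAbove k = j ∧
          (fun m => p ((argmaxIdx p).succAbove m)) ∈ E (p (argmaxIdx p)) k} ∩
          {p | ∀ m, m ≠ j → p m = a m}) := by
      rintro p ⟨_, hpl⟩ q ⟨_, hql⟩ hpq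
      funext m
      rcases eq_or_ne m j with hmj | hmj
      · have h1 : p (k₀.succAbove k₁) = q (k₀.succAbove k₁) := congrFun hpq k₁
        rw [hk₁] at h1
        rw [hmj]; exact h1
      · rw [hpl m hmj, hql m hmj]
    exact Set.Finite.of_finite_image (((hE2 β₀ k₁ c).subset himg)) hI

private lemma cov_slice {X : Type u} {N : ℕ} (h : Cov (N + 2) X) (T : Set X)
    (hT : Cardinal.mk (Fin (N + 1) → T) * Cardinal.aleph0 < Cardinal.mk X) :
    Cov (N + 1) T := by
  obtain ⟨D, hcov, hfin⟩ := h
  have hXne : Nonempty X :=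
    Cardinal.mk_ne_zero_iff.1 (lt_of_le_of_lt (Cardinal.zero_le _) hT).ne'
  obtain ⟨b₀⟩ := hXne
  set F : (Fin (N + 1) → T) → Set X :=
    fun q => {b | Fin.snoc (fun m => (q m : X)) b ∈ D (Fin.last (N + 1))} with hF
  have hFfin : ∀ q, (F q).Finite := by
    intro q
    have hl := hfin (Fin.last (N + 1)) (Fin.snoc (fun m => (q m : X)) b₀)
    have hsub : F q ⊆ (fun b => Fin.snoc (fun m => (q m : X)) b) ⁻¹'
        (D (Fin.last (N + 1)) ∩
          {p | ∀ j, j ≠ Fin.last (N + 1) → p j = (Fin.snoc (fun m => (q m : X)) b₀ : Fin (N + 2) → X) j}) := by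
      intro b hb
      refine ⟨hb, fun j hj => ?_⟩
      obtain ⟨j', rfl⟩ := Fin.exists_castSucc_eq.2 hj
      simp [Fin.snoc_castSucc]
    refine Set.Finite.subset (hl.preimage ?_) hsub
    intro b1 _ b2 _ h12
    have := congrFun h12 (Fin.last (N + 1))
    simpa [Fin.snoc_last] using this
  have hU : Cardinal.mk (⋃ q, F q) < Cardinal.mk X := by
    rcases isEmpty_or_nonempty (Fin (N + 1) → T) with he | hn
    · have : (⋃ q, F q) = ∅ := by simp
      rw [this]
      simpa using Cardinal.mk_ne_zero_iff.2 ⟨b₀⟩ |>.bot_lt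
    · refine lt_of_le_of_lt ?_ hT
      refine le_trans (Cardinal.mk_iUnion_le F) ?_
      refine mul_le_mul' le_rfl (ciSup_le' fun q => ?_)
      exact (hFfin q).lt_aleph0.le
  obtain ⟨b, hb⟩ : ∃ b, b ∉ ⋃ q, F q := by
    by_contra hc
    push_neg at hc
    have : (⋃ q, F q) = univ := eq_univ_of_forall hc
    rw [this, Cardinal.mk_univ] at hU
    exact lt_irrefl _ hU
  have hbF : ∀ q, b ∉ F q := fun q hq => hb (mem_iUnion.2 ⟨q, hq⟩)
  refine ⟨fun i => {q | Fin.snoc (fun m => (q m : X)) b ∈ D i.castSucc}, ?_, ?_⟩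
  · apply eq_univ_of_forall
    intro q
    obtain ⟨i, hi⟩ := mem_iUnion.1 (hcov ▸ mem_univ (Fin.snoc (fun m => (q m : X)) b))
    have hil : i ≠ Fin.last (N + 1) := fun hil => hbF q (by rwa [hil] at hi)
    obtain ⟨i', rfl⟩ := Fin.exists_castSucc_eq.2 hil
    exact mem_iUnion.2 ⟨i', hi⟩
  · intro i a
    set ψ : (Fin (N + 1) → T) → (Fin (N + 2) → X) :=
      fun q => Fin.snoc (fun m => (q m : X)) b with hψ
    have himg : ψ '' ({q | Fin.snoc (fun m => (q m : X)) b ∈ D i.castSucc} ∩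
        {q | ∀ m, m ≠ i → q m = a m}) ⊆
        D i.castSucc ∩ {p | ∀ j, j ≠ i.castSucc → p j = ψ a j} := by
      rintro _ ⟨q, ⟨hq1, hq2⟩, rfl⟩
      refine ⟨hq1, fun j hj => ?_⟩
      rcases eq_or_ne j (Fin.last (N + 1)) with rfl | hjl
      · simp [hψ, Fin.snoc_last]
      · obtain ⟨j', rfl⟩ := Fin.exists_castSucc_eq.2 hjl
        have hj' : j' ≠ i := fun hji => hj (by rw [hji])
        simp only [hψ, Fin.snoc_castSucc]
        exact congrArg Subtype.val (hq2 j' hj')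
    have hI : Set.InjOn ψ ({q | Fin.snoc (fun m => (q m : X)) b ∈ D i.castSucc} ∩
        {q | ∀ m, m ≠ i → q m = a m}) := by
      rintro p _ q _ hpq
      funext m
      have := congrFun hpq m.castSucc
      simp only [hψ, Fin.snoc_castSucc] at this
      exact Subtype.ext this
    exact Set.Finite.of_finite_image ((hfin i.castSucc (ψ a)).subset himg) hI


private lemma cov_forward : ∀ n : ℕ, Cov (n + 2) ((Cardinal.aleph n).ord.ToType) := by
  intro n
  induction n with
  | zero =>
    apply cov_step (N := 0)
    intro x
    have hIio : (Set.Iio x).Finite := by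
      have h0 := Cardinal.mk_Iio_ord_toType x
      simp only [Nat.cast_zero, Cardinal.aleph_zero] at h0
      exact Cardinal.lt_aleph0_iff_set_finite.1 h0
    have hIic : (Set.Iic x).Finite := by
      rw [← Set.Iio_insert]
      exact hIio.insert x
    have : Finite (Set.Iic x) := hIic
    exact cov_one_of_finite
  | succ m ih =>
    apply cov_step (N := m + 1)
    intro x
    have h2 : Cardinal.mk (Set.Iio x) < Cardinal.aleph (m + 1) := Cardinal.mk_Iio_ord_toType x
    have h3 : Cardinal.mk (Set.Iio x) ≤ Cardinal.aleph m := by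
      have hs : Cardinal.aleph ((m : Ordinal) + 1) = Order.succ (Cardinal.aleph (m : Ordinal)) := by
        rw [Ordinal.add_one_eq_succ, Cardinal.aleph_succ]
      have h2' : Cardinal.mk (Set.Iio x) < Order.succ (Cardinal.aleph (m : Ordinal)) := by
        rw [← hs]; exact_mod_cast h2
      exact Order.lt_succ_iff.1 h2'
    have h1 : Cardinal.mk (Set.Iic x) ≤ Cardinal.aleph m := by
      rw [← Set.Iio_insert]
      refine le_trans (Cardinal.mk_insert_le) ?_
      calc Cardinal.mk (Set.Iio x) + 1 ≤ Cardinal.aleph m + 1 := by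
            exact add_le_add_left h3 1
        _ = Cardinal.aleph m := Cardinal.add_one_eq (Cardinal.aleph0_le_aleph m)
    have := h1.trans_eq (Cardinal.mk_ord_toType (Cardinal.aleph m)).symm
    obtain ⟨f⟩ := (Cardinal.le_def _ _).1 this
    exact cov_pullback f ih

private lemma cov_backward : ∀ (n : ℕ) (X : Type u), Cov (n + 2) X →
    Cardinal.mk X ≤ Cardinal.aleph n := by
  intro n
  induction n with
  | zero =>
    intro X h
    by_contra hlt
    push_neg at hlt
    simp only [Nat.cast_zero, Cardinal.aleph_zero] at hlt
    obtain ⟨T, hT⟩ := Cardinal.le_mk_iff_exists_set.1 hlt.le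
    have hc : Cardinal.mk (Fin 1 → T) * Cardinal.aleph0 < Cardinal.mk X := by
      have h1 : Cardinal.mk (Fin 1 → T) = Cardinal.mk T :=
        Cardinal.mk_congr (Equiv.funUnique (Fin 1) T)
      rw [h1, hT, Cardinal.aleph0_mul_aleph0]
      exact hlt
    have hcov1 := cov_slice h T hc
    have : Finite T := finite_of_cov_one hcov1
    exact absurd (hT ▸ Cardinal.lt_aleph0_of_finite T) (lt_irrefl _)
  | succ m ih =>
    intro X h
    by_contra hlt
    push_neg at hlt
    obtain ⟨T, hT⟩ := Cardinal.le_mk_iff_exists_set.1 hlt.le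
    have haleph : Cardinal.aleph0 ≤ Cardinal.aleph (m + 1 : ℕ) := Cardinal.aleph0_le_aleph _
    have hc : Cardinal.mk (Fin (m + 2) → T) * Cardinal.aleph0 < Cardinal.mk X := by
      have h1 : Cardinal.mk (Fin (m + 2) → T) = Cardinal.mk T ^ (m + 2 : ℕ) := by
        rw [Cardinal.mk_arrow, Cardinal.mk_fin, Cardinal.lift_uzero, Cardinal.lift_natCast,
          Cardinal.power_natCast]
      rw [h1, hT, Cardinal.power_nat_eq haleph (by norm_num),
        Cardinal.mul_eq_max haleph le_rfl, max_eq_left haleph]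
      exact hlt
    have hcov := cov_slice (N := m + 1) h T hc
    have := ih T hcov
    rw [hT] at this
    have hmono : Cardinal.aleph (m : ℕ) < Cardinal.aleph ((m + 1 : ℕ) : Ordinal) := by
      rw [Cardinal.aleph_lt_aleph]
      exact_mod_cast Nat.lt_succ_self m
    exact absurd this hmono.not_ge

theorem kuratowski_covering (n : ℕ) (X : Type*) :
    Cardinal.mk X ≤ Cardinal.aleph n ↔
      ∃ D : Fin (n + 2) → Set (Fin (n + 2) → X),
        (⋃ i, D i) = Set.univ ∧
        ∀ (i : Fin (n + 2)) (a : Fin (n + 2) → X),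
          (D i ∩ {p : Fin (n + 2) → X | ∀ j, j ≠ i → p j = a j}).Finite := by
  constructor
  · intro h
    have := h.trans_eq (Cardinal.mk_ord_toType (Cardinal.aleph n)).symm
    obtain ⟨f⟩ := (Cardinal.le_def _ _).1 this
    exact cov_pullback f (cov_forward n)
  · intro h
    exact cov_backward n X h
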